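/- In the algebra B_q(S) generated by α, β, γ with relations αγ = qγα, qβγ = γβ, βα - qαβ = 1 - q, the element δ = (αβ - 1)γ is central. -/

import Mathlib

/-- In the algebra `B_q(S)` generated by `α, β, γ` with relations `αγ = qγα`,
`qβγ = γβ`, `βα - qαβ = (1-q)·1`, the element `δ = (αβ - 1)γ` is central. -/
theorem BqS_delta_central
    (k : Type*) [Field k] (A : Type*) [Ring A] [Algebra k A]
    (q : k) (hq : q ≠ 0) (α β γ : A)
    (h1 : α * γ = q • (γ * α))
    (h2 : q • (β * γ) = γ * β)
    (h3 : β * α - q • (α * β) = (1 - q) • (1 : A)) :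
    ∀ x ∈ Algebra.adjoin k ({α, β, γ} : Set A),
      ((α * β - 1) * γ) * x = x * ((α * β - 1) * γ) := by
  have hc1 : γ * α = q⁻¹ • (α * γ) := by
    rw [h1, smul_smul, inv_mul_cancel₀ hq, one_smul]
  have hc2 : γ * β = q • (β * γ) := h2.symm
  have hba : β * α = q • (α * β) + (1 - q) • (1 : A) := by
    rw [← h3]; abel
  have r1 : ∀ x : A, γ * (α * x) = q⁻¹ • (α * (γ * x)) := fun x => by
    rw [← mul_assoc, hc1, smul_mul_assoc, mul_assoc]
  have r2 : ∀ x : A, γ * (β * x) = q • (β * (γ * x)) := fun x => by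
    rw [← mul_assoc, hc2, smul_mul_assoc, mul_assoc]
  have r3 : ∀ x : A, β * (α * x) = q • (α * (β * x)) + (1 - q) • x := fun x => by
    rw [← mul_assoc, hba, add_mul, smul_mul_assoc, smul_mul_assoc, one_mul, mul_assoc]
  have hα : ((α * β - 1) * γ) * α = α * ((α * β - 1) * γ) := by
    simp only [sub_mul, one_mul, mul_sub, mul_assoc, mul_smul_comm, smul_mul_assoc,
      smul_smul, smul_sub, smul_add, mul_add, add_mul, r1, r2, r3, hc1, hc2, hba,
      mul_one]
    match_scalars <;> field_simp <;> ring
  have hβ : ((α * β - 1) * γ) * β = β * ((α * β - 1) * γ) := by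
    simp only [sub_mul, one_mul, mul_sub, mul_assoc, mul_smul_comm, smul_mul_assoc,
      smul_smul, smul_sub, smul_add, mul_add, add_mul, r1, r2, r3, hc1, hc2, hba,
      mul_one]
    match_scalars <;> field_simp <;> ring
  have hγ : ((α * β - 1) * γ) * γ = γ * ((α * β - 1) * γ) := by
    simp only [sub_mul, one_mul, mul_sub, mul_assoc, mul_smul_comm, smul_mul_assoc,
      smul_smul, smul_sub, smul_add, mul_add, add_mul, r1, r2, r3, hc1, hc2, hba,
      mul_one]
    match_scalars <;> field_simp <;> ring
  intro x hx
  induction hx using Algebra.adjoin_induction with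
  | mem y hy =>
    rcases hy with rfl | rfl | rfl
    · exact hα
    · exact hβ
    · exact hγ
  | algebraMap r =>
    rw [Algebra.commutes]
  | add y z _ _ hy hz =>
    rw [mul_add, add_mul, hy, hz]
  | mul y z _ _ hy hz =>
    rw [← mul_assoc, hy, mul_assoc, hz, mul_assoc]
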